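/- For every n ≥ 0 and all functions u, v : V_n → ℝ, the discrete integration-by-parts formula with boundary terms holds: ⟨u, Δ_n^D v⟩_n + Σ_{i=0,1,2} u(a_i)·∂_n^i v = ⟨v, Δ_n^D u⟩_n + Σ_{i=0,1,2} v(a_i)·∂_n^i u. -/

import Mathlib

open scoped Classical
open Real Set

noncomputable section

abbrev Pt : Type := ℝ × ℝ

/-- The three corners of the unit triangle. -/
def sierA : Fin 3 → Pt
  | 0 => (0, 0)
  | 1 => (1 / 2, Real.sqrt 3 / 2)
  | 2 => (1, 0)

/-- The three contractions `φᵢ(x) = (x + aᵢ)/2`. -/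
def ctr (i : Fin 3) (x : Pt) : Pt :=
  ((x.1 + (sierA i).1) / 2, (x.2 + (sierA i).2) / 2)

/-- The vertex sets `V n`. -/
def V : ℕ → Finset Pt
  | 0 => {sierA 0, sierA 1, sierA 2}
  | n + 1 => (V n).image (ctr 0) ∪ (V n).image (ctr 1) ∪ (V n).image (ctr 2)

/-- The (ordered) edge sets: `(x, y) ∈ Ed n` iff `{x,y} ∈ E_n`; each undirected
edge appears with both orientations. -/
def Ed : ℕ → Finset (Pt × Pt)
  | 0 => (V 0 ×ˢ V 0).filter fun p => p.1 ≠ p.2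
  | n + 1 => Finset.univ.biUnion fun i : Fin 3 => (Ed n).image fun p => (ctr i p.1, ctr i p.2)

/-- `V* = ⋃ n, V n`. -/
def Vstar : Set Pt := ⋃ n, (V n : Set Pt)

/-- The level-`n` energy `E_n(u,u) = (5/3)^n Σ_{{x,y} ∈ E_n} (u y - u x)²`
(each undirected edge counted once, whence the division by 2). -/
def En (n : ℕ) (u : Pt → ℝ) : ℝ :=
  (5 / 3 : ℝ) ^ n * (∑ p ∈ Ed n, (u p.2 - u p.1) ^ 2) / 2

/-- The discrete Laplacian `Δ_n u (x) = 5^n Σ_{y ∼ₙ x} (u y - u x)`. -/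
def lap (n : ℕ) (u : Pt → ℝ) (x : Pt) : ℝ :=
  (5 : ℝ) ^ n * ∑ p ∈ (Ed n).filter (fun p => p.1 = x), (u p.2 - u p.1)

/-- The discrete Dirichlet Laplacian: `Δ_n^D u = Δ_n u` off the boundary
`V₀ = {a₀,a₁,a₂}`, and `0` on the boundary. -/
def lapD (n : ℕ) (u : Pt → ℝ) (x : Pt) : ℝ :=
  if x ∈ (V 0 : Set Pt) then 0 else lap n u x

/-- The normal derivative `∂_n^i u = (5/3)^n Σ_{y ∼ₙ aᵢ} (u y − u aᵢ)`. -/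
def nder (n : ℕ) (i : Fin 3) (u : Pt → ℝ) : ℝ :=
  (5 / 3 : ℝ) ^ n * ∑ p ∈ (Ed n).filter (fun p => p.1 = sierA i), (u p.2 - u p.1)

/-- The corners are pairwise distinct. -/
lemma sierA_inj : Function.Injective sierA := by
  have h : (0:ℝ) < Real.sqrt 3 := Real.sqrt_pos.2 (by norm_num)
  intro i j hij
  fin_cases i <;> fin_cases j <;>
    simp_all [sierA, Prod.ext_iff] <;> nlinarith [h]

/-- `Ed n` is invariant under swapping the two endpoints. -/
lemma ed_symm : ∀ n : ℕ, ∀ p ∈ Ed n, (p.2, p.1) ∈ Ed n := by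
  intro n
  induction n with
  | zero =>
    intro p hp
    simp only [Ed, Finset.mem_filter, Finset.mem_product] at hp ⊢
    exact ⟨⟨hp.1.2, hp.1.1⟩, fun h => hp.2 h.symm⟩
  | succ n ih =>
    intro p hp
    simp only [Ed, Finset.mem_biUnion, Finset.mem_image, Finset.mem_univ, true_and] at hp ⊢
    obtain ⟨i, q, hq, hpq⟩ := hp
    exact ⟨i, (q.2, q.1), ih _ hq, by rw [← hpq]⟩

/-- Endpoints of edges lie in the vertex set. -/
lemma ed_fst_mem : ∀ n : ℕ, ∀ p ∈ Ed n, p.1 ∈ V n := by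
  intro n
  induction n with
  | zero =>
    intro p hp
    simp only [Ed, Finset.mem_filter, Finset.mem_product] at hp
    exact hp.1.1
  | succ n ih =>
    intro p hp
    simp only [Ed, Finset.mem_biUnion, Finset.mem_image, Finset.mem_univ, true_and] at hp
    obtain ⟨i, q, hq, hpq⟩ := hp
    have h1 : p.1 = ctr i q.1 := by rw [← hpq]
    have : p.1 ∈ (V n).image (ctr i) :=
      Finset.mem_image.2 ⟨q.1, ih _ hq, h1.symm⟩
    simp only [V, Finset.mem_union]
    fin_cases i
    · exact Or.inl (Or.inl this)
    · exact Or.inl (Or.inr this)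
    · exact Or.inr this

lemma ctr_fixed (i : Fin 3) : ctr i (sierA i) = sierA i := by
  simp only [ctr, Prod.ext_iff]
  constructor <;> ring

/-- Corners lie in every vertex set. -/
lemma sierA_mem_V (i : Fin 3) : ∀ n : ℕ, sierA i ∈ V n := by
  intro n
  induction n with
  | zero => fin_cases i <;> simp [V]
  | succ n ih =>
    have : sierA i ∈ (V n).image (ctr i) :=
      Finset.mem_image.2 ⟨sierA i, ih, ctr_fixed i⟩
    simp only [V, Finset.mem_union]
    fin_cases i
    · exact Or.inl (Or.inl this)
    · exact Or.inl (Or.inr this)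
    · exact Or.inr this

/-- Both sides of the integration-by-parts formula equal a single edge sum. -/
lemma ibp_key (n : ℕ) (u v : Pt → ℝ) :
    (∑ x ∈ V n, u x * lapD n v x) / 3 ^ n + ∑ i : Fin 3, u (sierA i) * nder n i v
      = (5 / 3 : ℝ) ^ n * ∑ p ∈ Ed n, u p.1 * (v p.2 - v p.1) := by
  set h : Pt → ℝ := fun x => ∑ p ∈ (Ed n).filter (fun p => p.1 = x), u p.1 * (v p.2 - v p.1)
    with hh
  have hB : ∀ x : Pt, u x * ∑ p ∈ (Ed n).filter (fun p => p.1 = x), (v p.2 - v p.1) = h x := by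
    intro x
    rw [hh, Finset.mul_sum]
    refine Finset.sum_congr rfl fun p hp => ?_
    rw [(Finset.mem_filter.1 hp).2]
  have hA : ∑ x ∈ V n, h x = ∑ p ∈ Ed n, u p.1 * (v p.2 - v p.1) :=
    Finset.sum_fiberwise_of_maps_to (ed_fst_mem n) _
  have hint : ∑ x ∈ V n, u x * lapD n v x
      = 5 ^ n * ∑ x ∈ V n, (if x ∈ (V 0 : Set Pt) then 0 else h x) := by
    rw [Finset.mul_sum]
    refine Finset.sum_congr rfl fun x _ => ?_
    rw [lapD]
    by_cases hx : x ∈ (V 0 : Set Pt)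
    · simp [hx]
    · simp only [hx, if_false, lap]
      rw [← hB x]; ring
  have hbd : ∑ i : Fin 3, u (sierA i) * nder n i v
      = (5 / 3 : ℝ) ^ n * ∑ x ∈ V 0, h x := by
    have : ∀ i : Fin 3, u (sierA i) * nder n i v = (5 / 3 : ℝ) ^ n * h (sierA i) := by
      intro i
      rw [nder, ← hB (sierA i)]; ring
    rw [Finset.sum_congr rfl fun i _ => this i, ← Finset.mul_sum]
    congr 1
    have hv0 : (V 0 : Finset Pt) = (Finset.univ : Finset (Fin 3)).image sierA := by
      ext x
      simp only [V, Finset.mem_insert, Finset.mem_singleton, Finset.mem_image,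
        Finset.mem_univ, true_and]
      constructor
      · rintro (h0 | h0 | h0)
        exacts [⟨0, h0.symm⟩, ⟨1, h0.symm⟩, ⟨2, h0.symm⟩]
      · rintro ⟨i, rfl⟩
        fin_cases i <;> simp
    rw [hv0, Finset.sum_image (fun i _ j _ hij => sierA_inj hij)]
  have hsplit : ∑ x ∈ V n, (if x ∈ (V 0 : Set Pt) then 0 else h x) + ∑ x ∈ V 0, h x
      = ∑ x ∈ V n, h x := by
    have hfilter : (V n).filter (fun x => x ∈ (V 0 : Set Pt)) = V 0 := by
      ext x
      simp only [Finset.mem_filter, Finset.mem_coe]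
      constructor
      · exact fun hx => hx.2
      · intro hx
        refine ⟨?_, hx⟩
        have : x ∈ ({sierA 0, sierA 1, sierA 2} : Finset Pt) := hx
        simp only [Finset.mem_insert, Finset.mem_singleton] at this
        rcases this with h0 | h0 | h0 <;> rw [h0] <;> exact sierA_mem_V _ n
    have e1 : ∑ x ∈ (V n).filter (fun x => ¬ x ∈ (V 0 : Set Pt)), h x
        = ∑ x ∈ V n, (if x ∈ (V 0 : Set Pt) then 0 else h x) := by
      rw [Finset.sum_filter]
      refine Finset.sum_congr rfl fun x _ => ?_
      by_cases hx : x ∈ (V 0 : Set Pt) <;> simp [hx]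
    have e0 := Finset.sum_filter_add_sum_filter_not (V n) (fun x => x ∈ (V 0 : Set Pt)) h
    rw [hfilter] at e0
    rw [← e0, e1]
    ring
  rw [hint, hbd, ← hA, ← hsplit, div_pow]
  field_simp

/-- Discrete integration by parts with boundary terms:
`⟨u, Δ_n^D v⟩_n + Σᵢ u(aᵢ) ∂_n^i v = ⟨v, Δ_n^D u⟩_n + Σᵢ v(aᵢ) ∂_n^i u`. -/
theorem integration_by_parts_boundary (n : ℕ) (u v : Pt → ℝ) :
    (∑ x ∈ V n, u x * lapD n v x) / 3 ^ n
        + ∑ i : Fin 3, u (sierA i) * nder n i v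
      = (∑ x ∈ V n, v x * lapD n u x) / 3 ^ n
        + ∑ i : Fin 3, v (sierA i) * nder n i u := by
  rw [ibp_key n u v, ibp_key n v u]
  congr 1
  have h1 : ∑ p ∈ Ed n, u p.1 * v p.2 = ∑ p ∈ Ed n, v p.1 * u p.2 := by
    refine Finset.sum_equiv (Equiv.prodComm Pt Pt) (fun p => ?_) (fun p hp => ?_)
    · constructor
      · exact fun hp => ed_symm n p hp
      · intro hp
        have := ed_symm n _ hp
        simpa using this
    · simp [mul_comm]
  have h2 : ∑ p ∈ Ed n, u p.1 * v p.1 = ∑ p ∈ Ed n, v p.1 * u p.1 :=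
    Finset.sum_congr rfl fun p _ => mul_comm _ _
  simp only [mul_sub, Finset.sum_sub_distrib]
  rw [h1, h2]
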